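/- Let M be a symplectic vector space with symplectic form Ω, let D ⊆ M be a coisotropic subspace, and let C ⊆ M be a Lagrangian subspace. Then (C ∩ D) + D⊥ is a Lagrangian subspace of M. -/

import Mathlib

open Module

/-- The symplectic complement of a subspace. -/
def sympCompl {K M : Type*} [Field K] [AddCommGroup M] [Module K M]
    (Ω : M →ₗ[K] M →ₗ[K] K) (C : Submodule K M) : Submodule K M where
  carrier := {v | ∀ w ∈ C, Ω v w = 0}
  add_mem' := by
    intro a b ha hb w hw
    simp [ha w hw, hb w hw]
  zero_mem' := by
    intro w hw
    simp
  smul_mem' := by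
    intro c a ha w hw
    simp [ha w hw]

/-- If `D` is coisotropic and `C` is Lagrangian in a symplectic vector space, then
`(C ∩ D) + D⊥` is a Lagrangian subspace. -/
theorem stmt3 {K M : Type*} [Field K] [AddCommGroup M] [Module K M]
    [FiniteDimensional K M]
    (Ω : M →ₗ[K] M →ₗ[K] K)
    (halt : ∀ v, Ω v v = 0)
    (hnd : ∀ v, (∀ w, Ω v w = 0) → v = 0)
    (D C : Submodule K M)
    (hD : sympCompl Ω D ≤ D)
    (hC : C = sympCompl Ω C) :
    (C ⊓ D) ⊔ sympCompl Ω D = sympCompl Ω ((C ⊓ D) ⊔ sympCompl Ω D) := by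
  have hskew : ∀ v w, Ω v w = - Ω w v := by
    intro v w
    have h := halt (v + w)
    simp [map_add, halt] at h
    linear_combination h
  have hrefl : Ω.IsRefl := fun v w h => by rw [hskew w v, h, neg_zero]
  have hcompl : ∀ V : Submodule K M, sympCompl Ω V = LinearMap.BilinForm.orthogonal Ω V := by
    intro V
    ext x
    constructor
    · intro hx n hn
      have := hx n hn
      exact hrefl x n this
    · intro hx w hw
      exact hrefl w x (hx w hw)
  have hnd' : LinearMap.BilinForm.Nondegenerate Ω :=
    ⟨fun v h => hnd v h, fun v h => hnd v fun w => hrefl w v (h w)⟩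
  have hdouble : ∀ V : Submodule K M,
      LinearMap.BilinForm.orthogonal Ω (LinearMap.BilinForm.orthogonal Ω V) = V :=
    fun V => LinearMap.BilinForm.orthogonal_orthogonal hnd' hrefl V
  have hsup : ∀ U V : Submodule K M, LinearMap.BilinForm.orthogonal Ω (U ⊔ V)
      = LinearMap.BilinForm.orthogonal Ω U ⊓ LinearMap.BilinForm.orthogonal Ω V := by
    intro U V
    ext x
    simp only [Submodule.mem_inf, LinearMap.BilinForm.mem_orthogonal_iff]
    constructor
    · intro h
      exact ⟨fun n hn => h n (Submodule.mem_sup_left hn),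
             fun n hn => h n (Submodule.mem_sup_right hn)⟩
    · rintro ⟨h1, h2⟩ n hn
      rcases Submodule.mem_sup.mp hn with ⟨a, ha, b, hb, rfl⟩
      have : Ω (a + b) x = Ω a x + Ω b x := by simp
      rw [this, h1 a ha, h2 b hb, add_zero]
  have hinf : ∀ U V : Submodule K M, LinearMap.BilinForm.orthogonal Ω (U ⊓ V)
      = LinearMap.BilinForm.orthogonal Ω U ⊔ LinearMap.BilinForm.orthogonal Ω V := by
    intro U V
    conv_lhs => rw [← hdouble U, ← hdouble V, ← hsup]
    rw [hdouble]
  simp only [hcompl] at *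
  rw [hsup, hinf, hdouble, ← hC]
  rw [sup_comm C, sup_inf_assoc_of_le C hD, sup_comm]
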